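/- Let G be a second countable topological group with right-invariant Borel measure μ, and {Λₙ} a Følner (space-filling) sequence in a Borel subsemigroup K of G, meaning μ(Λₙ) < ∞, μ(Λₙ) > 0 for large n, and μ(Λₙ Δ (Λₙ g))/μ(Λₙ) → 0 for every g ∈ K. Let f : G → 𝔥 be bounded, weakly measurable, with (g,h) ↦ ⟨f(g), f(h)⟩ Borel. Suppose γ_h := lim_{n→∞} (1/μ(Λₙ)) ∫_{Λₙ} ⟨f(g), f(gh)⟩ dg exists for every h ∈ G. Then for every h₁ ∈ K and h₂ ∈ G, lim_{n→∞} (1/μ(Λₙ)) ∫_{Λₙ} ⟨f(g h₁), f(g h₂)⟩ dg = γ_{h₁⁻¹ h₂}. -/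

import Mathlib

open MeasureTheory Filter
open scoped ENNReal RealInnerProductSpace Topology

/-- Lemma 2.5′: given a Følner (space-filling) sequence `Λ n` in a Borel
subsemigroup `K` of a second countable topological group with right invariant
measure, and a bounded weakly measurable `f : G → H` whose correlation averages
converge to `γ h`, the shifted correlation averages converge to `γ (h₁⁻¹ h₂)`
for `h₁ ∈ K`, `h₂ ∈ G`. -/
theorem shifted_correlation_limit
    {G : Type*} [TopologicalSpace G] [Group G] [IsTopologicalGroup G]
    [SecondCountableTopology G] [MeasurableSpace G] [BorelSpace G]
    (μ : Measure G) [μ.IsMulRightInvariant]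
    {H : Type*} [NormedAddCommGroup H] [InnerProductSpace ℝ H] [CompleteSpace H]
    (K : Set G) (hK : MeasurableSet K) (hKmul : ∀ a ∈ K, ∀ b ∈ K, a * b ∈ K)
    (Λ : ℕ → Set G) (hΛK : ∀ n, Λ n ⊆ K) (hΛm : ∀ n, MeasurableSet (Λ n))
    (hfin : ∀ n, μ (Λ n) < ⊤) (hpos : ∀ᶠ n in atTop, 0 < μ (Λ n))
    (hFolner : ∀ g ∈ K,
      Tendsto (fun n => (μ (symmDiff (Λ n) ((· * g) '' Λ n))).toReal / (μ (Λ n)).toReal)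
        atTop (𝓝 0))
    (f : G → H) (C : ℝ) (hC : ∀ g, ‖f g‖ ≤ C)
    (hfw : ∀ x : H, Measurable fun g => ⟪f g, x⟫)
    (hF : Measurable fun p : G × G => ⟪f p.1, f p.2⟫)
    (γ : G → ℝ)
    (hγ : ∀ h : G,
      Tendsto (fun n => (μ (Λ n)).toReal⁻¹ * ∫ g in Λ n, ⟪f g, f (g * h)⟫ ∂μ)
        atTop (𝓝 (γ h))) :
    ∀ h₁ ∈ K, ∀ h₂ : G,
      Tendsto (fun n => (μ (Λ n)).toReal⁻¹ * ∫ g in Λ n, ⟪f (g * h₁), f (g * h₂)⟫ ∂μ)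
        atTop (𝓝 (γ (h₁⁻¹ * h₂))) := by
  intro h₁ hh₁ h₂
  set h : G := h₁⁻¹ * h₂ with hh
  set φ : G → ℝ := fun g => ⟪f g, f (g * h)⟫ with hφdef
  have hC0 : 0 ≤ C := le_trans (norm_nonneg _) (hC 1)
  have hφm : Measurable φ :=
    hF.comp (measurable_id.prodMk (measurable_mul_const h))
  have hφbd : ∀ g, ‖φ g‖ ≤ C ^ 2 := by
    intro g
    calc ‖φ g‖ ≤ ‖f g‖ * ‖f (g * h)‖ := norm_inner_le_norm _ _
    _ ≤ C * C := mul_le_mul (hC _) (hC _) (norm_nonneg _) hC0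
    _ = C ^ 2 := (sq C).symm
  -- the translated sets
  set e : G ≃ᵐ G := MeasurableEquiv.mulRight h₁ with he
  have heapp : ∀ g : G, e g = g * h₁ := fun g => rfl
  set T : ℕ → Set G := fun n => (· * h₁) '' Λ n with hT
  have hTm : ∀ n, MeasurableSet (T n) := by
    intro n
    have : T n = e '' Λ n := by
      simp only [hT, he]; rfl
    rw [this]
    exact e.measurableSet_image.2 (hΛm n)
  have hμT : ∀ n, μ (T n) = μ (Λ n) := by
    intro n
    have himg : T n = (· * h₁⁻¹) ⁻¹' (Λ n) := by
      ext x
      constructor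
      · rintro ⟨y, hy, rfl⟩; simpa using hy
      · intro hx; exact ⟨x * h₁⁻¹, hx, by simp⟩
    rw [himg, measure_preimage_mul_right]
  -- integrability of φ on finite measure sets
  have hφint : ∀ (s : Set G), μ s < ⊤ → IntegrableOn φ s μ := by
    intro s hs
    have hconst : IntegrableOn (fun _ : G => C ^ 2) s μ := integrableOn_const hs.ne
    refine hconst.mono' hφm.aestronglyMeasurable ?_
    filter_upwards with g
    simpa [abs_of_nonneg (sq_nonneg C)] using hφbd g
  -- change of variables
  have key : ∀ n, (∫ g in Λ n, ⟪f (g * h₁), f (g * h₂)⟫ ∂μ) = ∫ g in T n, φ g ∂μ := by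
    intro n
    have h1 : (∫ g in T n, φ g ∂μ) = ∫ g in T n, φ g ∂(Measure.map e μ) := by
      rw [he, MeasurableEquiv.coe_mulRight, map_mul_right_eq_self μ h₁]
    have h2 : (∫ g in T n, φ g ∂(Measure.map e μ)) = ∫ g in e ⁻¹' (T n), φ (e g) ∂μ :=
      setIntegral_map_equiv e φ (T n)
    have h3 : e ⁻¹' (T n) = Λ n := by
      have : T n = e '' Λ n := rfl
      rw [this, Set.preimage_image_eq _ e.injective]
    rw [h1, h2, h3]
    refine setIntegral_congr_fun (hΛm n) fun g _ => ?_
    simp only [heapp, hφdef, hh]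
    congr 2
    group
  -- the error term
  have herr : ∀ n, ‖(∫ g in T n, φ g ∂μ) - ∫ g in Λ n, φ g ∂μ‖
      ≤ C ^ 2 * (μ (symmDiff (Λ n) (T n))).toReal := by
    intro n
    have hμTfin : μ (T n) < ⊤ := (hμT n).symm ▸ hfin n
    have hint1 : IntegrableOn φ (T n) μ := hφint _ hμTfin
    have hint2 : IntegrableOn φ (Λ n) μ := hφint _ (hfin n)
    have e1 : (∫ g in T n ∩ Λ n, φ g ∂μ) + ∫ g in T n \ Λ n, φ g ∂μ = ∫ g in T n, φ g ∂μ :=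
      integral_inter_add_diff (hΛm n) hint1
    have e2 : (∫ g in Λ n ∩ T n, φ g ∂μ) + ∫ g in Λ n \ T n, φ g ∂μ = ∫ g in Λ n, φ g ∂μ :=
      integral_inter_add_diff (hTm n) hint2
    have hcomm : (∫ g in T n ∩ Λ n, φ g ∂μ) = ∫ g in Λ n ∩ T n, φ g ∂μ := by
      rw [Set.inter_comm]
    have hsplit : (∫ g in T n, φ g ∂μ) - ∫ g in Λ n, φ g ∂μ
        = (∫ g in T n \ Λ n, φ g ∂μ) - ∫ g in Λ n \ T n, φ g ∂μ := by
      rw [← e1, ← e2, hcomm]; ring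
    have hb1 : ‖∫ g in T n \ Λ n, φ g ∂μ‖ ≤ C ^ 2 * (μ (T n \ Λ n)).toReal :=
      norm_setIntegral_le_of_norm_le_const
        (lt_of_le_of_lt (measure_mono Set.diff_subset) hμTfin)
        (fun x _ => hφbd x)
    have hb2 : ‖∫ g in Λ n \ T n, φ g ∂μ‖ ≤ C ^ 2 * (μ (Λ n \ T n)).toReal :=
      norm_setIntegral_le_of_norm_le_const
        (lt_of_le_of_lt (measure_mono Set.diff_subset) (hfin n))
        (fun x _ => hφbd x)
    have hsd : μ (symmDiff (Λ n) (T n)) = μ (Λ n \ T n) + μ (T n \ Λ n) := by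
      rw [Set.symmDiff_def, measure_union (disjoint_sdiff_sdiff) ((hTm n).diff (hΛm n))]
    have hfin1 : μ (Λ n \ T n) ≠ ⊤ :=
      (lt_of_le_of_lt (measure_mono Set.diff_subset) (hfin n)).ne
    have hfin2 : μ (T n \ Λ n) ≠ ⊤ :=
      (lt_of_le_of_lt (measure_mono Set.diff_subset) ((hμT n).symm ▸ hfin n)).ne
    have htr : (μ (symmDiff (Λ n) (T n))).toReal
        = (μ (Λ n \ T n)).toReal + (μ (T n \ Λ n)).toReal := by
      rw [hsd, ENNReal.toReal_add hfin1 hfin2]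
    calc ‖(∫ g in T n, φ g ∂μ) - ∫ g in Λ n, φ g ∂μ‖
        ≤ ‖∫ g in T n \ Λ n, φ g ∂μ‖ + ‖∫ g in Λ n \ T n, φ g ∂μ‖ := by
          rw [hsplit]; exact norm_sub_le _ _
      _ ≤ C ^ 2 * (μ (T n \ Λ n)).toReal + C ^ 2 * (μ (Λ n \ T n)).toReal :=
          add_le_add hb1 hb2
      _ = C ^ 2 * (μ (symmDiff (Λ n) (T n))).toReal := by rw [htr]; ring
  -- assemble
  set A : ℕ → ℝ := fun n => (μ (Λ n)).toReal⁻¹ * ∫ g in Λ n, φ g ∂μ with hA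
  set B : ℕ → ℝ := fun n =>
    (μ (Λ n)).toReal⁻¹ * ∫ g in Λ n, ⟪f (g * h₁), f (g * h₂)⟫ ∂μ with hB
  have hAlim : Tendsto A atTop (𝓝 (γ h)) := hγ h
  have hdiff : Tendsto (fun n => B n - A n) atTop (𝓝 0) := by
    have hbnd : ∀ n, ‖B n - A n‖
        ≤ C ^ 2 * ((μ (symmDiff (Λ n) (T n))).toReal / (μ (Λ n)).toReal) := by
      intro n
      have : B n - A n = (μ (Λ n)).toReal⁻¹
          * ((∫ g in T n, φ g ∂μ) - ∫ g in Λ n, φ g ∂μ) := by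
        simp only [hA, hB, key n]; ring
      rw [this, norm_mul, norm_inv]
      rw [Real.norm_eq_abs, abs_of_nonneg ENNReal.toReal_nonneg, div_eq_inv_mul]
      calc (μ (Λ n)).toReal⁻¹ * ‖(∫ g in T n, φ g ∂μ) - ∫ g in Λ n, φ g ∂μ‖
          ≤ (μ (Λ n)).toReal⁻¹ * (C ^ 2 * (μ (symmDiff (Λ n) (T n))).toReal) :=
            mul_le_mul_of_nonneg_left (herr n) (inv_nonneg.2 ENNReal.toReal_nonneg)
        _ = C ^ 2 * ((μ (Λ n)).toReal⁻¹ * (μ (symmDiff (Λ n) (T n))).toReal) := by ring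
    have hlim : Tendsto (fun n =>
        C ^ 2 * ((μ (symmDiff (Λ n) (T n))).toReal / (μ (Λ n)).toReal)) atTop (𝓝 0) := by
      have ht := (hFolner h₁ hh₁).const_mul (C ^ 2)
      rw [mul_zero] at ht
      exact ht
    exact squeeze_zero_norm hbnd hlim
  have : Tendsto (fun n => A n + (B n - A n)) atTop (𝓝 (γ h + 0)) :=
    hAlim.add hdiff
  simpa using this
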